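/- For the constrained problem min_{x∈[-1,1]} f(x) = x/4 with stochastic gradient g = 4 with probability 1/4 and g = -1 with probability 3/4 (so E[g] = 1/4 = f'(x)), for any step-size γ ≥ 0 the signSGD update x_{t+1} = x_t - γ·sign(g) satisfies E[f(x_{t+1})] = f(x_t) + γ/8, i.e., the objective increases in expectation. -/
import Mathlib

/-- signSGD on `f x = x/4` with stochastic gradient `g = 4` w.p. `1/4` and
`g = -1` w.p. `3/4`: for any step-size `γ ≥ 0`, the expected objective after one
signSGD step `x - γ·sign(g)` equals `f x + γ/8`, i.e. increases in expectation. -/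
theorem signSGD_counterexample_one_dim
    (f : ℝ → ℝ) (hf : ∀ x, f x = x / 4)
    (γ : ℝ) (hγ : 0 ≤ γ) (x : ℝ) (hx : x ∈ Set.Icc (-1 : ℝ) 1) :
    (1/4 : ℝ) * f (x - γ * Real.sign 4) + (3/4 : ℝ) * f (x - γ * Real.sign (-1))
      = f x + γ / 8 := by
  rw [hf, hf, hf, Real.sign_of_pos (by norm_num), Real.sign_of_neg (by norm_num)]
  ring
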